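/- For every p ∈ (1,2) there exists a constant C = C(p) > 0, depending only on p, such that for every positive integer n and every s ∈ ℝ, |Φ_n'(s)| ≤ C · (Φ_n(s))^{(p−1)/p}. -/

import Mathlib

noncomputable def Phi (p : ℝ) (n : ℕ) (s : ℝ) : ℝ :=
  if 1 / (n : ℝ) < |s| then |s| ^ p
  else p * (p - 2) / (8 * (n : ℝ) ^ p) * ((n : ℝ) ^ 2 * s ^ 2 - 1) ^ 2
      + p / (2 * (n : ℝ) ^ p) * ((n : ℝ) ^ 2 * s ^ 2 - 1) + 1 / (n : ℝ) ^ p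

noncomputable def Dphi (p : ℝ) (n : ℕ) (s : ℝ) : ℝ :=
  if 1 / (n : ℝ) ≤ |s| then p * |s| ^ (p - 2) * s
  else p * (p - 2) / (8 * (n : ℝ) ^ p) * (2 * ((n : ℝ) ^ 2 * s ^ 2 - 1) * ((n : ℝ) ^ 2 * (2 * s)))
      + p / (2 * (n : ℝ) ^ p) * ((n : ℝ) ^ 2 * (2 * s))

noncomputable def Gpoly (p : ℝ) (n : ℕ) (s : ℝ) : ℝ :=
  p * (p - 2) / (8 * (n : ℝ) ^ p) * ((n : ℝ) ^ 2 * s ^ 2 - 1) ^ 2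
      + p / (2 * (n : ℝ) ^ p) * ((n : ℝ) ^ 2 * s ^ 2 - 1) + 1 / (n : ℝ) ^ p

lemma hasDerivAt_Gpoly (p : ℝ) (n : ℕ) (s : ℝ) :
    HasDerivAt (Gpoly p n)
      (p * (p - 2) / (8 * (n : ℝ) ^ p) * (2 * ((n : ℝ) ^ 2 * s ^ 2 - 1) * ((n : ℝ) ^ 2 * (2 * s)))
        + p / (2 * (n : ℝ) ^ p) * ((n : ℝ) ^ 2 * (2 * s))) s := by
  have hq : HasDerivAt (fun x : ℝ => (n : ℝ) ^ 2 * x ^ 2 - 1) ((n : ℝ) ^ 2 * (2 * s)) s := by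
    have := ((hasDerivAt_pow 2 s).const_mul ((n : ℝ) ^ 2)).sub_const 1
    simpa using this
  have h1 := ((hq.pow 2).const_mul (p * (p - 2) / (8 * (n : ℝ) ^ p)))
  have h2 := (hq.const_mul (p / (2 * (n : ℝ) ^ p)))
  have := (h1.add h2).add_const (1 / (n : ℝ) ^ p)
  refine this.congr_deriv ?_
  ring

lemma Phi_eq_of_le (p : ℝ) (n : ℕ) (s : ℝ) (h : ¬ (1 / (n : ℝ) < |s|)) :
    Phi p n s = Gpoly p n s := by rw [Phi, if_neg h]; rfl

lemma Phi_at_boundary (p : ℝ) (n : ℕ) (hn : 0 < n) :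
    Phi p n (1 / (n : ℝ)) = (1 / (n : ℝ)) ^ p := by
  have hN : (0 : ℝ) < n := by exact_mod_cast hn
  have habs : |1 / (n : ℝ)| = 1 / (n : ℝ) := abs_of_pos (by positivity)
  have hu : (n : ℝ) ^ 2 * (1 / (n : ℝ)) ^ 2 - 1 = 0 := by field_simp; ring
  rw [Phi, if_neg (by rw [habs]; exact lt_irrefl _), hu,
    show ((1 : ℝ) / n) ^ p = ((n:ℝ) ^ p)⁻¹ by rw [one_div, Real.inv_rpow hN.le]]
  ring

lemma boundary_deriv_eq (p : ℝ) (n : ℕ) (hn : 0 < n) :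
    p * (p - 2) / (8 * (n : ℝ) ^ p) *
        (2 * ((n : ℝ) ^ 2 * (1 / (n : ℝ)) ^ 2 - 1) * ((n : ℝ) ^ 2 * (2 * (1 / (n : ℝ)))))
      + p / (2 * (n : ℝ) ^ p) * ((n : ℝ) ^ 2 * (2 * (1 / (n : ℝ))))
      = p * (1 / (n : ℝ)) ^ (p - 2) * (1 / (n : ℝ)) := by
  have hN : (0 : ℝ) < n := by exact_mod_cast hn
  have hNe : (n : ℝ) ≠ 0 := hN.ne'
  have hu : (n : ℝ) ^ 2 * (1 / (n : ℝ)) ^ 2 - 1 = 0 := by field_simp; ring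
  rw [hu]
  have h1 : ((1 : ℝ) / n) ^ (p - 2) = ((n:ℝ) ^ (p - 2))⁻¹ := by
    rw [one_div, Real.inv_rpow hN.le]
  have hsplit : (n : ℝ) ^ p = (n : ℝ) ^ (p - 2) * (n : ℝ) ^ (2 : ℕ) := by
    rw [← Real.rpow_natCast (n : ℝ) 2, ← Real.rpow_add hN]; norm_num
  have hp2 : ((n:ℝ) ^ (p - 2)) ≠ 0 := (Real.rpow_pos_of_pos hN _).ne'
  have hpp : ((n:ℝ) ^ p) ≠ 0 := (Real.rpow_pos_of_pos hN _).ne'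
  rw [h1]
  field_simp
  rw [hsplit]
  ring

lemma key_nonneg (p : ℝ) (hp1 : 1 < p) (n : ℕ) (hn : 0 < n) (s : ℝ) (hs : 0 ≤ s) :
    HasDerivAt (Phi p n) (Dphi p n s) s := by
  have hN : (0 : ℝ) < n := by exact_mod_cast hn
  have hNe : (n : ℝ) ≠ 0 := hN.ne'
  rcases lt_trichotomy (1 / (n : ℝ)) s with hlt | heq | hgt
  · -- outer region
    have hs0 : 0 < s := lt_trans (by positivity) hlt
    have hd : HasDerivAt (fun x : ℝ => x ^ p) (p * s ^ (p - 1)) s :=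
      Real.hasDerivAt_rpow_const (Or.inl hs0.ne')
    have hev : Phi p n =ᶠ[nhds s] (fun x : ℝ => x ^ p) := by
      filter_upwards [Ioi_mem_nhds hlt] with x hx
      have hx0 : 0 < x := lt_trans (by positivity) hx
      rw [Phi, if_pos (by rwa [abs_of_pos hx0]), abs_of_pos hx0]
    have h2 := hd.congr_of_eventuallyEq hev
    have hpow : p * s ^ (p - 2) * s = p * s ^ (p - 1) := by
      rw [mul_assoc, ← Real.rpow_add_one hs0.ne' (p - 2), show p - 2 + 1 = p - 1 by ring]
    rw [Dphi, if_pos (by rw [abs_of_pos hs0]; exact hlt.le), abs_of_pos hs0, hpow]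
    exact h2
  · -- boundary point  s = 1/n
    subst heq
    set s0 := 1 / (n : ℝ) with hs0def
    have hs0 : 0 < s0 := by positivity
    have habs : |s0| = s0 := abs_of_pos hs0
    have hD : Dphi p n s0 = p * s0 ^ (p - 2) * s0 := by
      rw [Dphi, if_pos (by rw [habs]), habs]
    have hev_le : ∀ᶠ x in nhdsWithin s0 (Set.Iic s0), Phi p n x = Gpoly p n x := by
      filter_upwards [mem_nhdsWithin_of_mem_nhds (Ioi_mem_nhds (neg_lt_self hs0)),
        self_mem_nhdsWithin] with x hx1 hx2
      refine Phi_eq_of_le p n x (not_lt.2 ?_)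
      rw [abs_le]; exact ⟨le_of_lt hx1, hx2⟩
    have hPhi_s0 : Phi p n s0 = Gpoly p n s0 :=
      Phi_eq_of_le p n s0 (by rw [habs]; exact lt_irrefl _)
    have hleft : HasDerivWithinAt (Phi p n) (Dphi p n s0) (Set.Iic s0) s0 := by
      have hg := ((hasDerivAt_Gpoly p n s0).hasDerivWithinAt
        (s := Set.Iic s0)).congr_of_eventuallyEq hev_le hPhi_s0
      rw [hD]
      refine hg.congr_deriv ?_
      rw [← boundary_deriv_eq p n hn]
    have hright : HasDerivWithinAt (Phi p n) (Dphi p n s0) (Set.Ici s0) s0 := by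
      have hd : HasDerivAt (fun x : ℝ => x ^ p) (p * s0 ^ (p - 1)) s0 :=
        Real.hasDerivAt_rpow_const (Or.inl hs0.ne')
      have hev : ∀ᶠ x in nhdsWithin s0 (Set.Ici s0), Phi p n x = x ^ p := by
        filter_upwards [self_mem_nhdsWithin] with x hx
        rcases eq_or_lt_of_le (Set.mem_Ici.1 hx) with h | h
        · rw [← h, Phi_at_boundary p n hn]
        · have hx0 : 0 < x := lt_trans hs0 h
          rw [Phi, if_pos (by rwa [abs_of_pos hx0]), abs_of_pos hx0]
      have hPx : Phi p n s0 = s0 ^ p := Phi_at_boundary p n hn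
      have hg := (hd.hasDerivWithinAt (s := Set.Ici s0)).congr_of_eventuallyEq hev hPx
      have hpow : p * s0 ^ (p - 2) * s0 = p * s0 ^ (p - 1) := by
        rw [mul_assoc, ← Real.rpow_add_one hs0.ne' (p - 2), show p - 2 + 1 = p - 1 by ring]
      rw [hD, hpow]
      exact hg
    have := hleft.union hright
    rw [Set.Iic_union_Ici] at this
    exact this.hasDerivAt (by simp)
  · -- inner region
    have hev : Phi p n =ᶠ[nhds s] Gpoly p n := by
      filter_upwards [Ioo_mem_nhds (by linarith [one_div_pos.2 hN] : -(1/(n:ℝ)) < s) hgt]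
        with x hx
      refine Phi_eq_of_le p n x (not_lt.2 ?_)
      rw [abs_le]; exact ⟨le_of_lt hx.1, le_of_lt hx.2⟩
    have hg := (hasDerivAt_Gpoly p n s).congr_of_eventuallyEq hev
    refine hg.congr_deriv ?_
    rw [Dphi, if_neg (by rw [abs_of_nonneg hs]; exact not_le.2 hgt)]

lemma Phi_neg (p : ℝ) (n : ℕ) (s : ℝ) : Phi p n (-s) = Phi p n s := by
  rw [Phi, Phi, abs_neg, neg_sq]

lemma Dphi_neg (p : ℝ) (n : ℕ) (s : ℝ) : Dphi p n (-s) = - Dphi p n s := by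
  rw [Dphi, Dphi, abs_neg, neg_sq]
  split_ifs with h
  · ring
  · ring

lemma key (p : ℝ) (hp1 : 1 < p) (n : ℕ) (hn : 0 < n) (s : ℝ) :
    HasDerivAt (Phi p n) (Dphi p n s) s := by
  rcases le_or_gt 0 s with hs | hs
  · exact key_nonneg p hp1 n hn s hs
  · have h := (key_nonneg p hp1 n hn (-s) (by linarith)).comp s (hasDerivAt_neg s)
    have heq : (Phi p n ∘ fun x : ℝ => -x) = Phi p n := funext fun x => Phi_neg p n x
    rw [heq] at h
    have : Dphi p n (-s) * (-1) = Dphi p n s := by rw [Dphi_neg]; ring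
    rwa [this] at h

lemma Phi_abs (p : ℝ) (n : ℕ) (s : ℝ) : Phi p n s = Phi p n |s| := by
  rcases abs_choice s with h | h
  · rw [h]
  · rw [h, Phi_neg]

theorem stmt_4 (p : ℝ) (hp1 : 1 < p) (hp2 : p < 2) :
    ∃ C > (0 : ℝ), ∀ n : ℕ, 0 < n → ∀ s : ℝ,
      |deriv (Phi p n) s| ≤ C * Phi p n s ^ ((p - 1) / p) := by
  set e : ℝ := (p - 1) / p with he
  set m : ℝ := (2 - p) * (4 - p) / 8 with hm
  clear_value e m
  have hp0 : 0 < p := by linarith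
  have hm0 : 0 < m := by rw [hm]; nlinarith
  have hme : 0 < m ^ e := Real.rpow_pos_of_pos hm0 e
  have he0 : 0 ≤ e := by rw [he]; exact div_nonneg (by linarith) (by linarith)
  have hpe : p * e = p - 1 := by rw [he]; field_simp
  refine ⟨p + 2 * p / m ^ e, by have h := div_pos (by linarith : (0:ℝ) < 2 * p) hme; linarith, fun n hn s => ?_⟩
  have hN : (0 : ℝ) < n := by exact_mod_cast hn
  have hNe : (n : ℝ) ≠ 0 := hN.ne'
  have hA : (0 : ℝ) < (n : ℝ) ^ p := Real.rpow_pos_of_pos hN p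
  rw [(key p hp1 n hn s).deriv]
  rcases le_or_gt (1 / (n : ℝ)) |s| with hge | hlt
  · -- outer case
    have hs0 : 0 < |s| := lt_of_lt_of_le (by positivity) hge
    have hPhi : Phi p n s = |s| ^ p := by
      rcases eq_or_lt_of_le hge with h | h
      · rw [Phi_abs, ← h, Phi_at_boundary p n hn]
      · rw [Phi, if_pos h]
    have hD : |Dphi p n s| = p * |s| ^ (p - 1) := by
      rw [Dphi, if_pos hge, abs_mul, abs_mul, abs_of_pos hp0,
        Real.abs_rpow_of_nonneg (abs_nonneg s), abs_abs, mul_assoc,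
        ← Real.rpow_add_one hs0.ne' (p - 2), show p - 2 + 1 = p - 1 by ring]
    have hPe : (|s| ^ p) ^ e = |s| ^ (p - 1) := by
      rw [← Real.rpow_mul (abs_nonneg s), hpe]
    rw [hD, hPhi, hPe]
    have hpow : 0 ≤ |s| ^ (p - 1) := Real.rpow_nonneg (abs_nonneg s) _
    have hdp : 0 ≤ 2 * p / m ^ e := by positivity
    nlinarith
  · -- inner case
    have hsle : |s| ≤ 1 / (n : ℝ) := hlt.le
    have hD : Dphi p n s = p * (p - 2) / (8 * (n : ℝ) ^ p) *
        (2 * ((n : ℝ) ^ 2 * s ^ 2 - 1) * ((n : ℝ) ^ 2 * (2 * s)))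
        + p / (2 * (n : ℝ) ^ p) * ((n : ℝ) ^ 2 * (2 * s)) := by
      rw [Dphi, if_neg (not_le.2 hlt)]
    set u : ℝ := (n : ℝ) ^ 2 * s ^ 2 - 1 with hu
    clear_value u
    have hu1 : -1 ≤ u := by rw [hu]; nlinarith [sq_nonneg ((n:ℝ) * s)]
    have hns : (n:ℝ) * |s| ≤ 1 := by
      have h0 := mul_le_mul_of_nonneg_left hsle hN.le
      rwa [mul_one_div, div_self hNe] at h0
    have hu0 : u ≤ 0 := by
      have h2 : ((n:ℝ) * |s|) ^ 2 ≤ 1 := by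
        nlinarith [mul_nonneg hN.le (abs_nonneg s)]
      rw [mul_pow, sq_abs] at h2
      rw [hu]; linarith
    have hQ : m ≤ p * (p - 2) / 8 * u ^ 2 + p / 2 * u + 1 := by
      have h1 : (0:ℝ) ≤ u + 1 := by linarith
      have h2 : (0:ℝ) ≤ (p - 2) * u + (6 - p) := by nlinarith
      have hterm : (0:ℝ) ≤ p * ((u + 1) * ((p - 2) * u + (6 - p))) :=
        mul_nonneg hp0.le (mul_nonneg h1 h2)
      have hkey : p * (p - 2) / 8 * u ^ 2 + p / 2 * u + 1 - (2 - p) * (4 - p) / 8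
          = p * ((u + 1) * ((p - 2) * u + (6 - p))) / 8 := by ring
      rw [hm]; linarith
    have hPhiEq : Phi p n s = (p * (p - 2) / 8 * u ^ 2 + p / 2 * u + 1) / ((n:ℝ) ^ p) := by
      rw [Phi_eq_of_le p n s (not_lt.2 hlt.le), Gpoly, ← hu]
      ring
    have hDbound : |Dphi p n s| ≤ 2 * p * (n : ℝ) / ((n:ℝ) ^ p) := by
      have hfac : Dphi p n s = ((n:ℝ)^2 * s / ((n:ℝ)^p)) * (p * (p - 2) / 2 * u + p) := by
        rw [hD]; ring
      rw [hfac, abs_mul]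
      have h1 : |(n:ℝ)^2 * s / ((n:ℝ)^p)| ≤ (n:ℝ) / ((n:ℝ)^p) := by
        rw [abs_div, abs_of_pos hA]
        gcongr
        rw [abs_mul, abs_of_nonneg (by positivity : (0:ℝ) ≤ (n:ℝ)^2)]
        have h3 := mul_le_mul_of_nonneg_left hsle (by positivity : (0:ℝ) ≤ (n:ℝ)^2)
        have h4 : (n:ℝ)^2 * (1 / (n:ℝ)) = (n:ℝ) := by field_simp
        linarith
      have hprod : (-u) * (2 - p) ≤ 1 * 1 :=
        mul_le_mul (by linarith) (by linarith) (by linarith) (by norm_num)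
      have h2 : |p * (p - 2) / 2 * u + p| ≤ 2 * p := by
        have hx : (0:ℝ) ≤ p * ((-u) * (2 - p)) := by
          apply mul_nonneg hp0.le
          exact mul_nonneg (by linarith) (by linarith)
        have hy : p * ((-u) * (2 - p)) ≤ p * (1 * 1) :=
          mul_le_mul_of_nonneg_left hprod hp0.le
        have hid : p * (p - 2) / 2 * u + p = p * ((-u) * (2 - p)) / 2 + p := by ring
        rw [abs_le]
        refine ⟨by linarith, by linarith⟩
      calc |(n:ℝ)^2 * s / ((n:ℝ)^p)| * |p * (p - 2) / 2 * u + p|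
          ≤ ((n:ℝ) / ((n:ℝ)^p)) * (2 * p) :=
            mul_le_mul h1 h2 (abs_nonneg _) (by positivity)
        _ = 2 * p * (n : ℝ) / ((n:ℝ)^p) := by ring
    have hAe : ((n:ℝ)^p)^e = (n:ℝ)^(p-1) := by rw [← Real.rpow_mul hN.le, hpe]
    have hAB : (n:ℝ)^p = (n:ℝ)^(p-1) * n := by
      rw [← Real.rpow_add_one hNe (p-1), show p - 1 + 1 = p by ring]
    have hB : (0:ℝ) < (n:ℝ)^(p-1) := Real.rpow_pos_of_pos hN _
    have hPhi_lb : m / ((n:ℝ)^p) ≤ Phi p n s := by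
      rw [hPhiEq]
      gcongr
    have hPhi0 : 0 ≤ Phi p n s := le_trans (div_nonneg hm0.le hA.le) hPhi_lb
    have hstep : (m / ((n:ℝ)^p)) ^ e ≤ Phi p n s ^ e :=
      Real.rpow_le_rpow (div_nonneg hm0.le hA.le) hPhi_lb he0
    have hval : (m / ((n:ℝ)^p)) ^ e = m ^ e / (n:ℝ)^(p-1) := by
      rw [Real.div_rpow hm0.le hA.le, hAe]
    have hPhie0 : 0 ≤ Phi p n s ^ e := Real.rpow_nonneg hPhi0 _
    calc |Dphi p n s| ≤ 2 * p * (n : ℝ) / ((n:ℝ)^p) := hDbound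
      _ = (2 * p / m ^ e) * (m ^ e / (n:ℝ)^(p-1)) := by
          rw [hAB]; field_simp
      _ = (2 * p / m ^ e) * ((m / ((n:ℝ)^p)) ^ e) := by rw [hval]
      _ ≤ (2 * p / m ^ e) * (Phi p n s ^ e) :=
          mul_le_mul_of_nonneg_left hstep (div_pos (by linarith : (0:ℝ) < 2 * p) hme).le
      _ ≤ (p + 2 * p / m ^ e) * Phi p n s ^ e := by
          have h9 := mul_nonneg hp0.le hPhie0
          have h10 : (p + 2 * p / m ^ e) * Phi p n s ^ e
              = p * Phi p n s ^ e + (2 * p / m ^ e) * Phi p n s ^ e := by ring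
          linarith only [h9, h10]
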